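/- Let x, η ∈ S^{d-1} with 1 + 2^i d(x,η) ≤ K, t ∈ (0,1], and let f satisfy |f(y) − f(x)| ≤ M d(x,y)^t on B(x,δ), f bounded. Let ψ be a function with ∫ ψ = 0 and |ψ(y)| ≤ c_m 2^{i(d-1)/2}/(1 + 2^i d(y,η))^m for all m. Then |∫_{S^{d-1}} ψ(y) f(y) dy| ≤ C 2^{-i(2t+d-1)/2}, with C depending on M, δ, d, t, ‖f‖_∞, K and the constants c_m. -/

import Mathlib

open MeasureTheory Metric Set
open scoped Pointwise ENNReal

/-- The surface measure on the unit sphere `S^{d-1} ⊂ ℝ^d` (total mass `ω_{d-1}`). -/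
noncomputable def sphereMeasure (d : ℕ) :
    Measure (sphere (0 : EuclideanSpace ℝ (Fin d)) 1) :=
  (volume : Measure (EuclideanSpace ℝ (Fin d))).toSphere

/-- The geodesic distance `d(x,y) = arccos (x ⬝ y)` on the unit sphere. -/
noncomputable def geodesicDist {d : ℕ} (x y : sphere (0 : EuclideanSpace ℝ (Fin d)) 1) : ℝ :=
  Real.arccos (inner (𝕜 := ℝ) (x : EuclideanSpace ℝ (Fin d)) (y : EuclideanSpace ℝ (Fin d)))

lemma geo_nonneg {d : ℕ} (x y : sphere (0 : EuclideanSpace ℝ (Fin d)) 1) :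
    0 ≤ geodesicDist x y := Real.arccos_nonneg _

lemma geo_bounds {d : ℕ} (x y : sphere (0 : EuclideanSpace ℝ (Fin d)) 1) :
    dist x y ≤ geodesicDist x y ∧ geodesicDist x y ≤ Real.pi / 2 * dist x y := by
  set E := EuclideanSpace ℝ (Fin d)
  set cxy : ℝ := inner (𝕜 := ℝ) (x : E) (y : E) with hc
  have hnx : ‖(x : E)‖ = 1 := norm_eq_of_mem_sphere x
  have hny : ‖(y : E)‖ = 1 := norm_eq_of_mem_sphere y
  have hcabs : |cxy| ≤ 1 := by
    have := abs_real_inner_le_norm (x : E) (y : E)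
    rwa [hnx, hny, one_mul] at this
  have hc1 : cxy ≤ 1 := (abs_le.mp hcabs).2
  have hc1' : -1 ≤ cxy := (abs_le.mp hcabs).1
  set θ : ℝ := Real.arccos cxy with hθ
  have hθ0 : 0 ≤ θ := Real.arccos_nonneg _
  have hθπ : θ ≤ Real.pi := Real.arccos_le_pi _
  have hcosθ : Real.cos θ = cxy := Real.cos_arccos hc1' hc1
  have hdist : dist x y ^ 2 = 2 - 2 * cxy := by
    rw [Subtype.dist_eq, dist_eq_norm, norm_sub_sq_real, hnx, hny]
    ring
  have hd0 : (0:ℝ) ≤ dist x y := dist_nonneg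
  have hgeo : geodesicDist x y = θ := rfl
  constructor
  · -- dist ≤ θ : dist^2 = 2 - 2cosθ ≤ θ^2
    have hcoslb : 1 - θ ^ 2 / 2 ≤ Real.cos θ := Real.one_sub_sq_div_two_le_cos
    have hsq : dist x y ^ 2 ≤ θ ^ 2 := by rw [hdist, ← hcosθ]; nlinarith
    rw [hgeo]
    nlinarith
  · -- θ ≤ π/2 * dist : (2/π θ)^2 ≤ 2 - 2 cos θ = dist^2
    have hub : Real.cos θ ≤ 1 - 2 / Real.pi ^ 2 * θ ^ 2 :=
      Real.cos_le_one_sub_mul_cos_sq (by rw [abs_of_nonneg hθ0]; exact hθπ)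
    have hπ : (0:ℝ) < Real.pi := Real.pi_pos
    have hsq : (2 / Real.pi * θ) ^ 2 ≤ dist x y ^ 2 := by
      rw [hdist, ← hcosθ]
      have h4 : (2 / Real.pi * θ) ^ 2 = 2 * (2 / Real.pi ^ 2 * θ ^ 2) := by ring
      linarith
    have h2 : 2 / Real.pi * θ ≤ dist x y := by
      have h1 : 0 ≤ 2 / Real.pi * θ := by positivity
      nlinarith
    rw [hgeo]
    calc θ = Real.pi / 2 * (2 / Real.pi * θ) := by field_simp
    _ ≤ Real.pi / 2 * dist x y := by
        apply mul_le_mul_of_nonneg_left h2 (by positivity)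

lemma cap_bound (d : ℕ) (hd : 2 ≤ d) :
    ∃ A : ℝ, 0 < A ∧ ∀ (x : sphere (0 : EuclideanSpace ℝ (Fin d)) 1) (r : ℝ), 0 < r →
      sphereMeasure d (closedBall x r) ≤ ENNReal.ofReal (A * r ^ (d - 1)) := by
  classical
  set E := EuclideanSpace ℝ (Fin d)
  have hV : volume (ball (0 : E) 1) ≠ ⊤ := measure_ball_lt_top.ne
  set V : ℝ := (volume (ball (0 : E) 1)).toReal with hVdef
  have hVpos : 0 < V := ENNReal.toReal_pos (measure_ball_pos volume 0 one_pos).ne' hV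
  set A0 : ℝ := (d : ℝ) * (5 * 2 ^ d * V) with hA0
  have hA0pos : 0 < A0 := by positivity
  -- core bound for 0 < r ≤ 2
  have core : ∀ (x : sphere (0 : E) 1) (r : ℝ), 0 < r → r ≤ 2 →
      sphereMeasure d (closedBall x r) ≤ ENNReal.ofReal (A0 * r ^ (d - 1)) := by
    intro x r hr hr2
    have hmeas : MeasurableSet (closedBall x r) := measurableSet_closedBall
    rw [sphereMeasure, Measure.toSphere_apply' _ hmeas]
    set N : ℕ := ⌈1 / r⌉₊ with hN
    -- inclusion into union of balls along the segment
    have hsub : Ioo (0 : ℝ) 1 • ((↑) '' closedBall x r : Set E) ⊆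
        ⋃ k ∈ Finset.range (N + 1), closedBall ((k * r) • (x : E)) (2 * r) := by
      rintro z hz
      rw [Set.mem_smul] at hz
      obtain ⟨a, ha, w, hw, rfl⟩ := hz
      obtain ⟨y, hy, rfl⟩ := hw
      have hyx : ‖(y : E) - (x : E)‖ ≤ r := by
        have := mem_closedBall.mp hy
        rwa [Subtype.dist_eq, dist_eq_norm] at this
      have ha0 : 0 < a := ha.1
      have ha1 : a < 1 := ha.2
      set k : ℕ := ⌊a / r⌋₊ with hk
      have hkN : k < N + 1 := by
        have h0 : a / r ≤ 1 / r := by gcongr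

        have h1 : k ≤ N := le_trans (Nat.floor_le_floor h0) (Nat.floor_le_ceil _)
        omega
      refine Set.mem_biUnion (Finset.mem_range.mpr hkN) ?_
      rw [mem_closedBall, dist_eq_norm]
      have hkr_le : (k : ℝ) * r ≤ a := by
        have h2 := Nat.floor_le (by positivity : (0:ℝ) ≤ a / r)
        calc (k : ℝ) * r ≤ a / r * r := by nlinarith
        _ = a := by field_simp
      have hakr : a - (k : ℝ) * r < r := by
        have h2 : a / r < (k : ℝ) + 1 := Nat.lt_floor_add_one (a / r)
        rw [div_lt_iff₀ hr] at h2
        linarith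
      have hxn : ‖(x : E)‖ = 1 := norm_eq_of_mem_sphere x
      have hdec : a • (y : E) - ((k : ℝ) * r) • (x : E)
          = a • ((y : E) - (x : E)) + (a - (k : ℝ) * r) • (x : E) := by
        rw [smul_sub, sub_smul]; abel
      calc ‖a • (y : E) - ((k : ℝ) * r) • (x : E)‖
          ≤ ‖a • ((y : E) - (x : E))‖ + ‖(a - (k : ℝ) * r) • (x : E)‖ := by
            rw [hdec]; exact norm_add_le _ _
        _ ≤ 2 * r := by
            rw [norm_smul, norm_smul, hxn, mul_one, Real.norm_eq_abs, Real.norm_eq_abs,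
              abs_of_pos ha0, abs_of_nonneg (by linarith)]
            nlinarith [norm_nonneg ((y : E) - (x : E))]
    -- measure of the union
    have hballs : ∀ k : ℕ, volume (closedBall ((k * r : ℝ) • (x : E)) (2 * r))
        = ENNReal.ofReal ((2 * r) ^ d) * volume (ball (0 : E) 1) := by
      intro k
      rw [Measure.addHaar_closedBall _ _ (by positivity : (0:ℝ) ≤ 2 * r)]
      congr 1
      rw [finrank_euclideanSpace_fin]
    have hmono := measure_mono (μ := (volume : Measure E)) hsub
    have hunion : volume (⋃ k ∈ Finset.range (N + 1), closedBall ((k * r : ℝ) • (x : E)) (2 * r))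
        ≤ (N + 1 : ℕ) * (ENNReal.ofReal ((2 * r) ^ d) * volume (ball (0 : E) 1)) := by
      refine le_trans (measure_biUnion_finset_le _ _) ?_
      simp only [hballs, Finset.sum_const, Finset.card_range, nsmul_eq_mul]
      exact le_rfl
    have hreal : (d : ℝ) * (((N : ℝ) + 1) * ((2 * r) ^ d * V)) ≤ A0 * r ^ (d - 1) := by
      have hNle : (N : ℝ) ≤ 1 / r + 1 := le_of_lt (by
        have := Nat.ceil_lt_add_one (by positivity : (0:ℝ) ≤ 1 / r)
        exact_mod_cast this)
      have hrd : r ^ d = r ^ (d - 1) * r := by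
        conv_lhs => rw [show d = (d - 1) + 1 by omega]
        rw [pow_succ]
      have hrpow_pos : (0:ℝ) < r ^ (d - 1) := by positivity
      have h5 : ((N : ℝ) + 1) * r ≤ 1 + 2 * r := by
        have : ((N : ℝ) + 1) * r ≤ (1 / r + 2) * r := by nlinarith
        calc ((N : ℝ) + 1) * r ≤ (1 / r + 2) * r := this
        _ = 1 + 2 * r := by field_simp
      calc (d : ℝ) * (((N : ℝ) + 1) * ((2 * r) ^ d * V))
          = (d : ℝ) * (2 ^ d * V) * (((N : ℝ) + 1) * r) * r ^ (d - 1) := by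
            rw [mul_pow, hrd]; ring
        _ ≤ (d : ℝ) * (2 ^ d * V) * 5 * r ^ (d - 1) := by
            have h6 : ((N : ℝ) + 1) * r ≤ 5 := by linarith
            have h7 : (0:ℝ) ≤ (d : ℝ) * (2 ^ d * V) := by positivity
            have h8 := mul_le_mul_of_nonneg_right
              (mul_le_mul_of_nonneg_left h6 h7) hrpow_pos.le
            linarith [h8]
        _ = A0 * r ^ (d - 1) := by rw [hA0]; ring
    calc (Module.finrank ℝ E : ℝ≥0∞) * volume (Ioo (0:ℝ) 1 • ((↑) '' closedBall x r : Set E))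
        ≤ (d : ℝ≥0∞) * ((N + 1 : ℕ) * (ENNReal.ofReal ((2 * r) ^ d) * volume (ball (0 : E) 1))) := by
          rw [show Module.finrank ℝ E = d from finrank_euclideanSpace_fin]
          exact mul_le_mul_right (le_trans hmono hunion) _
      _ = ENNReal.ofReal ((d : ℝ) * (((N : ℝ) + 1) * ((2 * r) ^ d * V))) := by
          have hVeq : volume (ball (0 : E) 1) = ENNReal.ofReal V :=
            (ENNReal.ofReal_toReal hV).symm
          rw [hVeq, ← ENNReal.ofReal_natCast d, ← ENNReal.ofReal_natCast (N + 1),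
            ← ENNReal.ofReal_mul (by positivity),
            ← ENNReal.ofReal_mul (by positivity), ← ENNReal.ofReal_mul (by positivity)]
          congr 1
          push_cast
          ring
      _ ≤ ENNReal.ofReal (A0 * r ^ (d - 1)) := ENNReal.ofReal_le_ofReal hreal
  -- general radius
  refine ⟨A0 * 2 ^ (d - 1), by positivity, fun x r hr => ?_⟩
  rcases le_or_gt r 2 with h2 | h2
  · refine (core x r hr h2).trans (ENNReal.ofReal_le_ofReal ?_)
    have h1 : (0:ℝ) ≤ r ^ (d - 1) := by positivity
    have h3 : (1:ℝ) ≤ 2 ^ (d - 1) := one_le_pow₀ (by norm_num)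
    have h4 := mul_le_mul_of_nonneg_right (mul_le_mul_of_nonneg_left h3 hA0pos.le) h1
    rw [mul_one] at h4
    linarith
  · have hsub2 : closedBall x r ⊆ closedBall x 2 := by
      intro y _
      rw [mem_closedBall, Subtype.dist_eq, dist_eq_norm]
      calc ‖(y : E) - (x : E)‖ ≤ ‖(y : E)‖ + ‖(x : E)‖ := norm_sub_le _ _
      _ ≤ 2 := by
          rw [norm_eq_of_mem_sphere y, norm_eq_of_mem_sphere x]; norm_num
    refine ((measure_mono hsub2).trans (core x 2 two_pos le_rfl)).trans
      (ENNReal.ofReal_le_ofReal ?_)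
    have h4 : (1:ℝ) ≤ r ^ (d - 1) := one_le_pow₀ (by linarith)
    have h5 : (0:ℝ) ≤ A0 * 2 ^ (d - 1) := by positivity
    have h6 := mul_le_mul_of_nonneg_left h4 h5
    rw [mul_one] at h6
    linarith

instance sphereMeasure_finite (d : ℕ) : IsFiniteMeasure (sphereMeasure d) := by
  unfold sphereMeasure; infer_instance

lemma sphere_dist_le_two {d : ℕ} (x y : sphere (0 : EuclideanSpace ℝ (Fin d)) 1) :
    dist x y ≤ 2 := by
  rw [Subtype.dist_eq, dist_eq_norm]
  calc ‖(x : EuclideanSpace ℝ (Fin d)) - y‖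
      ≤ ‖(x : EuclideanSpace ℝ (Fin d))‖ + ‖(y : EuclideanSpace ℝ (Fin d))‖ := norm_sub_le _ _
  _ ≤ 2 := by rw [norm_eq_of_mem_sphere x, norm_eq_of_mem_sphere y]; norm_num

lemma sum_inv_sq (N : ℕ) : ∑ k ∈ Finset.range N, (((k : ℝ) + 1)⁻¹) ^ 2 ≤ 2 := by
  have key : ∀ n : ℕ, 1 ≤ n → ∑ k ∈ Finset.range n, (((k : ℝ) + 1)⁻¹) ^ 2 ≤ 2 - ((n : ℝ))⁻¹ := by
    intro n hn
    induction n with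
    | zero => omega
    | succ n ih =>
      rcases Nat.eq_zero_or_pos n with rfl | hn'
      · norm_num
      · rw [Finset.sum_range_succ]
        have h1 : (0:ℝ) < (n:ℝ) := by exact_mod_cast hn'
        have h2 : (0:ℝ) < (n:ℝ) + 1 := by positivity
        have step : (((n : ℝ) + 1)⁻¹) ^ 2 ≤ (n:ℝ)⁻¹ - ((n:ℝ) + 1)⁻¹ := by
          have e : (n:ℝ)⁻¹ - ((n:ℝ) + 1)⁻¹ = ((n:ℝ) * ((n:ℝ) + 1))⁻¹ := by
            field_simp; ring
          rw [e]
          have h3 : ((n:ℝ) * ((n:ℝ) + 1)) ≤ ((n:ℝ) + 1) ^ 2 := by nlinarith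
          calc (((n : ℝ) + 1)⁻¹) ^ 2 = (((n:ℝ) + 1) ^ 2)⁻¹ := by rw [inv_pow]
          _ ≤ ((n:ℝ) * ((n:ℝ) + 1))⁻¹ := by
              apply inv_anti₀ (by positivity) h3
        have := ih hn'
        push_cast
        push_cast at this
        linarith
  rcases Nat.eq_zero_or_pos N with rfl | hN
  · simp
  · have := key N hN
    have h1 : (0:ℝ) < (N:ℝ) := by exact_mod_cast hN
    have h2 : (0:ℝ) ≤ ((N:ℝ))⁻¹ := by positivity
    linarith

lemma annulus_bound (d : ℕ) (hd : 2 ≤ d) {t : ℝ} (ht : 0 < t) (ht1 : t ≤ 1)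
    {A : ℝ} (hA : 0 < A)
    (capA : ∀ (x : sphere (0 : EuclideanSpace ℝ (Fin d)) 1) (r : ℝ), 0 < r →
      sphereMeasure d (closedBall x r) ≤ ENNReal.ofReal (A * r ^ (d - 1)))
    (i : ℕ) (x : sphere (0 : EuclideanSpace ℝ (Fin d)) 1) :
    ∫ y, dist y x ^ t * ((1 + 2 ^ i * dist y x)⁻¹) ^ (d + 2) ∂(sphereMeasure d)
      ≤ 2 * A * (((2:ℝ) ^ i)⁻¹ ^ t * (((2:ℝ) ^ i)⁻¹) ^ (d - 1)) := by
  classical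
  set μ := sphereMeasure d with hμdef
  set s : ℝ := ((2:ℝ) ^ i)⁻¹ with hs
  have hspos : 0 < s := by positivity
  have hsinv : (2:ℝ) ^ i * s = 1 := by rw [hs]; field_simp
  set N : ℕ := 2 ^ (i + 2) with hN
  set b : ℕ → ℝ := fun k => (((k:ℝ) + 1) * s) ^ t * ((((k:ℝ) + 1))⁻¹) ^ (d + 2) with hb
  have hbnn : ∀ k, 0 ≤ b k := fun k =>
    mul_nonneg (Real.rpow_nonneg (by positivity) _) (by positivity)
  set Ak : ℕ → Set (sphere (0 : EuclideanSpace ℝ (Fin d)) 1) := fun k =>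
    {y | ((k:ℝ)) ≤ 2 ^ i * dist y x ∧ 2 ^ i * dist y x < (k:ℝ) + 1} with hAk
  have hcontd : Continuous fun y : sphere (0 : EuclideanSpace ℝ (Fin d)) 1 =>
      (2:ℝ) ^ i * dist y x := continuous_const.mul (continuous_id.dist continuous_const)
  have hAkm : ∀ k, MeasurableSet (Ak k) := fun k =>
    (measurableSet_le measurable_const hcontd.measurable).inter
      (measurableSet_lt hcontd.measurable measurable_const)
  set h : sphere (0 : EuclideanSpace ℝ (Fin d)) 1 → ℝ := fun y =>
    dist y x ^ t * ((1 + 2 ^ i * dist y x)⁻¹) ^ (d + 2) with hh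
  have hcont_h : Continuous h := by
    apply Continuous.mul
    · exact (continuous_id.dist continuous_const).rpow_const (fun y => Or.inr ht.le)
    · apply Continuous.pow
      apply Continuous.inv₀ (continuous_const.add hcontd)
      intro y
      have h0 : (0:ℝ) ≤ 2 ^ i * dist y x := by positivity
      show (1:ℝ) + 2 ^ i * dist y x ≠ 0
      linarith [h0]
  set H : sphere (0 : EuclideanSpace ℝ (Fin d)) 1 → ℝ := fun y =>
    ∑ k ∈ Finset.range N, (Ak k).indicator (fun _ => b k) y with hH
  have hle : ∀ y, h y ≤ H y := by
    intro y
    have hr0 : (0:ℝ) ≤ dist y x := dist_nonneg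
    have hr2 : dist y x ≤ 2 := sphere_dist_le_two y x
    set k : ℕ := ⌊2 ^ i * dist y x⌋₊ with hk
    have hk1 : (k : ℝ) ≤ 2 ^ i * dist y x := Nat.floor_le (by positivity)
    have hk2 : 2 ^ i * dist y x < (k : ℝ) + 1 := Nat.lt_floor_add_one _
    have hkmem : y ∈ Ak k := ⟨hk1, hk2⟩
    have hkN : k < N := by
      have hlt : (2:ℝ) ^ i * dist y x < (N:ℝ) := by
        have e : (N : ℝ) = 4 * 2 ^ i := by
          rw [hN]; push_cast [pow_add]; ring
        rw [e]
        nlinarith [pow_pos (by norm_num : (0:ℝ) < 2) i]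
      rw [hk]
      exact (Nat.floor_lt (n := N) (by positivity : (0:ℝ) ≤ 2 ^ i * dist y x)).mpr
        (by exact_mod_cast hlt)
    have hbk : h y ≤ b k := by
      have hb1 : dist y x ^ t ≤ (((k:ℝ) + 1) * s) ^ t := by
        apply Real.rpow_le_rpow hr0 ?_ ht.le
        calc dist y x = (2 ^ i * dist y x) * s := by
              rw [mul_comm ((2:ℝ)^i) (dist y x), mul_assoc, hsinv, mul_one]
        _ ≤ ((k:ℝ) + 1) * s := mul_le_mul_of_nonneg_right hk2.le hspos.le
      have hb2 : ((1 + 2 ^ i * dist y x)⁻¹) ^ (d + 2) ≤ ((((k:ℝ) + 1))⁻¹) ^ (d + 2) := by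
        apply pow_le_pow_left₀ (by positivity)
        apply inv_anti₀ (by positivity)
        linarith
      exact mul_le_mul hb1 hb2 (by positivity) (Real.rpow_nonneg (by positivity) _)
    have : b k ≤ H y := by
      rw [hH]
      have : (Ak k).indicator (fun _ => b k) y = b k := Set.indicator_of_mem hkmem _
      rw [← this]
      apply Finset.single_le_sum (f := fun j => (Ak j).indicator (fun _ => b j) y)
        (fun j _ => Set.indicator_nonneg (fun _ _ => hbnn j) y) (Finset.mem_range.mpr hkN)
    linarith
  have hint_h : Integrable h μ := by
    refine Integrable.mono' (integrable_const ((2:ℝ) ^ t)) hcont_h.measurable.aestronglyMeasurable ?_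
    filter_upwards with y
    rw [Real.norm_eq_abs]
    have hr0 : (0:ℝ) ≤ dist y x := dist_nonneg
    have h1 : dist y x ^ t ≤ (2:ℝ) ^ t :=
      Real.rpow_le_rpow hr0 (sphere_dist_le_two y x) ht.le
    have h2 : ((1 + 2 ^ i * dist y x)⁻¹) ^ (d + 2) ≤ 1 := by
      apply pow_le_one₀ (by positivity)
      apply inv_le_one_of_one_le₀
      have : (0:ℝ) ≤ 2 ^ i * dist y x := by positivity
      linarith
    have h0 : 0 ≤ h y :=
      mul_nonneg (Real.rpow_nonneg hr0 _) (by positivity)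
    rw [abs_of_nonneg h0]
    calc h y ≤ dist y x ^ t * 1 :=
          mul_le_mul_of_nonneg_left h2 (Real.rpow_nonneg hr0 _)
    _ = dist y x ^ t := mul_one _
    _ ≤ (2:ℝ) ^ t := h1
  have hint_H : Integrable H μ :=
    integrable_finset_sum _ fun k _ => (integrable_const (b k)).indicator (hAkm k)
  have hIle : ∫ y, h y ∂μ ≤ ∫ y, H y ∂μ := integral_mono hint_h hint_H hle
  have hHeq : ∫ y, H y ∂μ = ∑ k ∈ Finset.range N, (μ (Ak k)).toReal • b k := by
    rw [hH, integral_finset_sum _ (fun k _ => (integrable_const (b k)).indicator (hAkm k))]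
    congr 1
    ext k
    exact integral_indicator_const (b k) (hAkm k)
  have hterm : ∀ k : ℕ, (μ (Ak k)).toReal • b k
      ≤ A * (s ^ t * s ^ (d - 1)) * (((k:ℝ) + 1)⁻¹) ^ 2 := by
    intro k
    have hkp : (0:ℝ) < (k:ℝ) + 1 := by positivity
    have hsubcap : Ak k ⊆ closedBall x (((k:ℝ) + 1) * s) := by
      intro y hy
      rw [mem_closedBall]
      have h1 : 2 ^ i * dist y x < (k:ℝ) + 1 := hy.2
      calc dist y x = (2 ^ i * dist y x) * s := by
            rw [mul_comm ((2:ℝ)^i) (dist y x), mul_assoc, hsinv, mul_one]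
      _ ≤ ((k:ℝ) + 1) * s := mul_le_mul_of_nonneg_right h1.le hspos.le
    have hμk : (μ (Ak k)).toReal ≤ A * (((k:ℝ) + 1) * s) ^ (d - 1) := by
      apply ENNReal.toReal_le_of_le_ofReal (by positivity)
      exact (measure_mono hsubcap).trans (capA x _ (by positivity))
    have hbk : (0:ℝ) ≤ b k := hbnn k
    rw [smul_eq_mul, mul_comm]
    calc b k * (μ (Ak k)).toReal ≤ b k * (A * (((k:ℝ) + 1) * s) ^ (d - 1)) :=
          mul_le_mul_of_nonneg_left hμk hbk
    _ = A * (s ^ t * s ^ (d - 1)) *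
          (((k:ℝ) + 1) ^ t * ((k:ℝ) + 1) ^ (d - 1) * (((k:ℝ) + 1)⁻¹) ^ (d + 2)) := by
        simp only [hb]
        rw [Real.mul_rpow hkp.le hspos.le, mul_pow]
        ring
    _ ≤ A * (s ^ t * s ^ (d - 1)) * (((k:ℝ) + 1)⁻¹) ^ 2 := by
        apply mul_le_mul_of_nonneg_left ?_ (by positivity)
        have e1 : ((k:ℝ) + 1) ^ t ≤ (k:ℝ) + 1 := by
          nth_rewrite 2 [← Real.rpow_one ((k:ℝ) + 1)]
          exact Real.rpow_le_rpow_of_exponent_le (by push_cast; linarith) ht1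
        have e2 : ((k:ℝ) + 1) * (((k:ℝ) + 1) ^ (d - 1) * (((k:ℝ) + 1)⁻¹) ^ (d + 2))
            = (((k:ℝ) + 1)⁻¹) ^ 2 := by
          have hd2 : d + 2 = 1 + (d - 1) + 2 := by omega
          rw [hd2, inv_pow, inv_pow]
          rw [pow_add, pow_add, pow_one]
          field_simp
        calc ((k:ℝ) + 1) ^ t * ((k:ℝ) + 1) ^ (d - 1) * (((k:ℝ) + 1)⁻¹) ^ (d + 2)
            ≤ ((k:ℝ) + 1) * ((k:ℝ) + 1) ^ (d - 1) * (((k:ℝ) + 1)⁻¹) ^ (d + 2) := by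
              apply mul_le_mul_of_nonneg_right
                (mul_le_mul_of_nonneg_right e1 (by positivity)) (by positivity)
        _ = (((k:ℝ) + 1)⁻¹) ^ 2 := by rw [← e2]; ring
    _ = A * (s ^ t * s ^ (d - 1)) * (((k:ℝ) + 1)⁻¹) ^ 2 := rfl
  calc ∫ y, h y ∂μ ≤ ∫ y, H y ∂μ := hIle
  _ = ∑ k ∈ Finset.range N, (μ (Ak k)).toReal • b k := hHeq
  _ ≤ ∑ k ∈ Finset.range N, A * (s ^ t * s ^ (d - 1)) * (((k:ℝ) + 1)⁻¹) ^ 2 :=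
      Finset.sum_le_sum fun k _ => hterm k
  _ = A * (s ^ t * s ^ (d - 1)) * ∑ k ∈ Finset.range N, (((k:ℝ) + 1)⁻¹) ^ 2 := by
      rw [← Finset.mul_sum]
  _ ≤ A * (s ^ t * s ^ (d - 1)) * 2 := by
      apply mul_le_mul_of_nonneg_left (sum_inv_sq N)
      have : (0:ℝ) ≤ s ^ t := Real.rpow_nonneg hspos.le _
      positivity
  _ = 2 * A * (s ^ t * s ^ (d - 1)) := by ring

lemma pow_identity (d : ℕ) (hd : 2 ≤ d) (t : ℝ) (i : ℕ) :
    (2:ℝ) ^ ((i:ℝ) * ((d:ℝ) - 1) / 2) * (((2:ℝ) ^ i)⁻¹ ^ t * (((2:ℝ) ^ i)⁻¹) ^ (d - 1))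
      = (2:ℝ) ^ (-(i:ℝ) * (2 * t + (d:ℝ) - 1) / 2) := by
  have h2 : (0:ℝ) < 2 := two_pos
  have hsr : ((2:ℝ) ^ i)⁻¹ = (2:ℝ) ^ (-(i:ℝ)) := by
    rw [← Real.rpow_natCast 2 i, ← Real.rpow_neg h2.le]
  rw [hsr, ← Real.rpow_natCast ((2:ℝ) ^ (-(i:ℝ))) (d - 1), ← Real.rpow_mul h2.le,
    ← Real.rpow_mul h2.le, ← Real.rpow_add h2, ← Real.rpow_add h2]
  congr 1
  have hcast : ((d - 1 : ℕ) : ℝ) = (d:ℝ) - 1 := by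
    have h1 : (1:ℕ) ≤ d := by omega
    push_cast [Nat.cast_sub h1]
    ring
  rw [hcast]
  ring

set_option maxHeartbeats 1000000

/-- Local decay of needlet coefficients near a Hölder point: if `f` is locally `t`-Hölder
at `x` (`0 < t ≤ 1`), bounded, and `ψ` is a localized function centered at `η` with
`∫ψ = 0`, `|ψ(y)| ≤ c_m 2^{i(d-1)/2}/(1+2^i d(y,η))^m` for every `m`, and
`1 + 2^i d(x,η) ≤ K`, then `|∫ ψ f| ≤ C 2^{-i(2t+d-1)/2}`. -/
theorem local_coefficient_decay (d : ℕ) (hd : 2 ≤ d) (t M δ Mf K : ℝ)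
    (ht : 0 < t) (ht1 : t ≤ 1) (hδ : 0 < δ)
    (x : sphere (0 : EuclideanSpace ℝ (Fin d)) 1)
    (f : sphere (0 : EuclideanSpace ℝ (Fin d)) 1 → ℝ)
    (hfm : Measurable f) (hfb : ∀ y, |f y| ≤ Mf)
    (hHolder : ∀ y, geodesicDist x y ≤ δ → |f y - f x| ≤ M * geodesicDist x y ^ t)
    (c : ℕ → ℝ) :
    ∃ C, ∀ (i : ℕ) (η : sphere (0 : EuclideanSpace ℝ (Fin d)) 1)
      (ψ : sphere (0 : EuclideanSpace ℝ (Fin d)) 1 → ℝ),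
      Measurable ψ →
      (∫ y, ψ y ∂(sphereMeasure d)) = 0 →
      (∀ (m : ℕ) (y : sphere (0 : EuclideanSpace ℝ (Fin d)) 1),
        |ψ y| ≤ c m * (2 : ℝ) ^ ((i : ℝ) * (d - 1) / 2) / (1 + 2 ^ i * geodesicDist y η) ^ m) →
      1 + 2 ^ i * geodesicDist x η ≤ K →
      |∫ y, ψ y * f y ∂(sphereMeasure d)|
        ≤ C * (2 : ℝ) ^ (-(i : ℝ) * (2 * t + d - 1) / 2) := by
  classical
  obtain ⟨A, hA, capA⟩ := cap_bound d hd
  have hMf : 0 ≤ Mf := (abs_nonneg (f x)).trans (hfb x)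
  have hδt : (0:ℝ) < δ ^ t := Real.rpow_pos_of_pos hδ t
  have hπ := Real.pi_gt_three
  have hπ2 : (1:ℝ) ≤ Real.pi / 2 := by linarith
  set M'' : ℝ := Real.pi / 2 * (|M| + 2 * Mf / δ ^ t) with hM''
  have hquot : (0:ℝ) ≤ 2 * Mf / δ ^ t := by positivity
  have hM''nn : 0 ≤ M'' := by
    have := abs_nonneg M
    rw [hM'']
    nlinarith
  set Km : ℝ := max K 1 with hKm
  have hKm1 : 1 ≤ Km := le_max_right _ _
  have hKm0 : 0 < Km := lt_of_lt_of_le one_pos hKm1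
  set m : ℕ := d + 2 with hm
  refine ⟨|c m| * Km ^ m * M'' * (2 * A), ?_⟩
  intro i η ψ hψm hψ0 hψ K_bound
  set μ := sphereMeasure d with hμdef
  set P : ℝ := (2:ℝ) ^ ((i:ℝ) * ((d:ℝ) - 1) / 2) with hP
  have hPpos : 0 < P := Real.rpow_pos_of_pos two_pos _
  have h2i : (0:ℝ) < 2 ^ i := by positivity
  -- `c m` is nonnegative
  have hQxpos : (0:ℝ) < (1 + 2 ^ i * geodesicDist x η) ^ m := by
    have := geo_nonneg x η
    positivity
  have hcm : 0 ≤ c m := by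
    have h0 := (abs_nonneg (ψ x)).trans (hψ m x)
    by_contra hneg
    push_neg at hneg
    have hlt : c m * P / (1 + 2 ^ i * geodesicDist x η) ^ m < 0 :=
      div_neg_of_neg_of_pos (mul_neg_of_neg_of_pos hneg hPpos) hQxpos
    linarith
  -- pointwise Hölder-type bound via the chordal distance
  have hfd : ∀ y, |f y - f x| ≤ M'' * dist y x ^ t := by
    intro y
    have hgeo_nn : 0 ≤ geodesicDist x y := geo_nonneg x y
    have h2 : geodesicDist x y ≤ Real.pi / 2 * dist x y := (geo_bounds x y).2
    have hdnn : (0:ℝ) ≤ dist x y := dist_nonneg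
    have h3 : geodesicDist x y ^ t ≤ (Real.pi / 2 * dist x y) ^ t :=
      Real.rpow_le_rpow hgeo_nn h2 ht.le
    have h4 : (Real.pi / 2 * dist x y) ^ t = (Real.pi / 2) ^ t * dist x y ^ t :=
      Real.mul_rpow (by positivity) hdnn
    have h5 : (Real.pi / 2 : ℝ) ^ t ≤ Real.pi / 2 := by
      nth_rewrite 2 [← Real.rpow_one (Real.pi / 2)]
      exact Real.rpow_le_rpow_of_exponent_le hπ2 ht1
    have hdxt : (0:ℝ) ≤ dist x y ^ t := Real.rpow_nonneg hdnn t
    have hchain : geodesicDist x y ^ t ≤ Real.pi / 2 * dist x y ^ t := by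
      calc geodesicDist x y ^ t ≤ (Real.pi / 2) ^ t * dist x y ^ t := by rw [← h4]; exact h3
      _ ≤ Real.pi / 2 * dist x y ^ t := mul_le_mul_of_nonneg_right h5 hdxt
    rw [dist_comm y x]
    rcases le_or_gt (geodesicDist x y) δ with hcase | hcase
    · have h1 := hHolder y hcase
      have hgt : (0:ℝ) ≤ geodesicDist x y ^ t := Real.rpow_nonneg hgeo_nn t
      calc |f y - f x| ≤ M * geodesicDist x y ^ t := h1
      _ ≤ |M| * geodesicDist x y ^ t := mul_le_mul_of_nonneg_right (le_abs_self M) hgt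
      _ ≤ |M| * (Real.pi / 2 * dist x y ^ t) :=
          mul_le_mul_of_nonneg_left hchain (abs_nonneg M)
      _ ≤ M'' * dist x y ^ t := by
          rw [hM'']
          nlinarith [mul_nonneg hquot hdxt, abs_nonneg M]
    · have h1 : |f y - f x| ≤ 2 * Mf := by
        have := abs_sub (f y) (f x)
        have hy := hfb y
        have hx := hfb x
        linarith
      have h2' : δ ^ t ≤ geodesicDist x y ^ t :=
        Real.rpow_le_rpow hδ.le hcase.le ht.le
      have h3' : δ ^ t ≤ Real.pi / 2 * dist x y ^ t := le_trans h2' hchain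
      have key : 2 * Mf ≤ 2 * Mf / δ ^ t * (Real.pi / 2 * dist x y ^ t) := by
        have h6 := mul_le_mul_of_nonneg_left h3' hquot
        rwa [div_mul_cancel₀ _ hδt.ne'] at h6
      have hdxt : (0:ℝ) ≤ dist x y ^ t := Real.rpow_nonneg dist_nonneg t
      calc |f y - f x| ≤ 2 * Mf := h1
      _ ≤ 2 * Mf / δ ^ t * (Real.pi / 2 * dist x y ^ t) := key
      _ ≤ M'' * dist x y ^ t := by
          rw [hM'']
          nlinarith [mul_nonneg (abs_nonneg M) hdxt]
  -- pointwise bound on ψ via the chordal distance to x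
  have hψb : ∀ y, |ψ y| ≤ c m * P * Km ^ m * ((1 + 2 ^ i * dist y x)⁻¹) ^ m := by
    intro y
    have hgeoyη : dist y η ≤ geodesicDist y η := (geo_bounds y η).1
    have hgeoxη : dist x η ≤ geodesicDist x η := (geo_bounds x η).1
    have hgeoyη0 : 0 ≤ geodesicDist y η := geo_nonneg y η
    have hgeoxη0 : 0 ≤ geodesicDist x η := geo_nonneg x η
    set Q : ℝ := 1 + 2 ^ i * geodesicDist y η with hQ
    set R : ℝ := 1 + 2 ^ i * dist y x with hR
    have hdyx : (0:ℝ) ≤ dist y x := dist_nonneg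
    have hdyη : (0:ℝ) ≤ dist y η := dist_nonneg
    have hdxη : (0:ℝ) ≤ dist x η := dist_nonneg
    have hQ1 : 1 ≤ Q := by rw [hQ]; nlinarith
    have hR1 : 1 ≤ R := by rw [hR]; nlinarith
    have hKb : 1 + 2 ^ i * dist x η ≤ Km := by
      have h1 : 1 + 2 ^ i * dist x η ≤ 1 + 2 ^ i * geodesicDist x η := by nlinarith
      exact le_trans h1 (le_trans K_bound (le_max_left _ _))
    have htri : dist y x ≤ dist y η + dist x η := by
      calc dist y x ≤ dist y η + dist η x := dist_triangle y η x
      _ = dist y η + dist x η := by rw [dist_comm η x]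
    have hchain : R ≤ Km * Q := by
      have h1 : R ≤ (1 + 2 ^ i * dist y η) * (1 + 2 ^ i * dist x η) := by
        rw [hR]
        have ha := mul_le_mul_of_nonneg_left htri (le_of_lt h2i)
        have hb := mul_nonneg (mul_nonneg h2i.le hdyη) (mul_nonneg h2i.le hdxη)
        nlinarith [ha, hb]
      have h2 : (1 + 2 ^ i * dist y η) ≤ Q := by rw [hQ]; nlinarith
      have h3 : (0:ℝ) ≤ 1 + 2 ^ i * dist x η := by nlinarith
      have h4 : (0:ℝ) ≤ Q := by linarith
      calc R ≤ (1 + 2 ^ i * dist y η) * (1 + 2 ^ i * dist x η) := h1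
      _ ≤ Q * Km := mul_le_mul h2 hKb h3 h4
      _ = Km * Q := mul_comm _ _
    have hQm : (0:ℝ) < Q ^ m := by positivity
    have hRm : (0:ℝ) < R ^ m := by positivity
    have hpow : R ^ m ≤ Km ^ m * Q ^ m := by
      rw [← mul_pow]
      exact pow_le_pow_left₀ (by linarith) hchain m
    have hcP : (0:ℝ) ≤ c m * P := mul_nonneg hcm hPpos.le
    have h1 : (Q ^ m)⁻¹ ≤ Km ^ m * (R ^ m)⁻¹ := by
      rw [← div_eq_mul_inv, le_div_iff₀ hRm, inv_mul_eq_div, div_le_iff₀ hQm]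
      exact hpow
    have hstep : c m * P / Q ^ m ≤ c m * P * Km ^ m * (R ^ m)⁻¹ := by
      rw [div_eq_mul_inv]
      calc c m * P * (Q ^ m)⁻¹ ≤ c m * P * (Km ^ m * (R ^ m)⁻¹) :=
            mul_le_mul_of_nonneg_left h1 hcP
      _ = c m * P * Km ^ m * (R ^ m)⁻¹ := by ring
    have hthis := hψ m y
    rw [← hQ] at hthis
    rw [inv_pow]
    exact hthis.trans hstep
  set D : ℝ := c m * P * Km ^ m * M'' with hD
  have hDnn : 0 ≤ D := by
    rw [hD]
    have : (0:ℝ) ≤ Km ^ m := by positivity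
    exact mul_nonneg (mul_nonneg (mul_nonneg hcm hPpos.le) this) hM''nn
  set h : sphere (0 : EuclideanSpace ℝ (Fin d)) 1 → ℝ := fun y =>
    dist y x ^ t * ((1 + 2 ^ i * dist y x)⁻¹) ^ (d + 2) with hh
  have hdom : ∀ y, |ψ y * (f y - f x)| ≤ D * h y := by
    intro y
    have hdyx : (0:ℝ) ≤ dist y x := dist_nonneg
    have hRnn : (0:ℝ) ≤ ((1 + 2 ^ i * dist y x)⁻¹) ^ m := by positivity
    have hAnn : (0:ℝ) ≤ c m * P * Km ^ m * ((1 + 2 ^ i * dist y x)⁻¹) ^ m := by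
      have : (0:ℝ) ≤ Km ^ m := by positivity
      exact mul_nonneg (mul_nonneg (mul_nonneg hcm hPpos.le) this) hRnn
    rw [abs_mul]
    calc |ψ y| * |f y - f x|
        ≤ (c m * P * Km ^ m * ((1 + 2 ^ i * dist y x)⁻¹) ^ m) * (M'' * dist y x ^ t) :=
          mul_le_mul (hψb y) (hfd y) (abs_nonneg _) hAnn
    _ = D * h y := by rw [hD, hh, hm]; ring
  -- continuity and integrability facts
  have hcontd : Continuous fun y : sphere (0 : EuclideanSpace ℝ (Fin d)) 1 =>
      (2:ℝ) ^ i * dist y x := continuous_const.mul (continuous_id.dist continuous_const)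
  have hcont_h : Continuous h := by
    apply Continuous.mul
    · exact (continuous_id.dist continuous_const).rpow_const (fun y => Or.inr ht.le)
    · apply Continuous.pow
      apply Continuous.inv₀ (continuous_const.add hcontd)
      intro y
      have h0 : (0:ℝ) ≤ 2 ^ i * dist y x := by positivity
      show (1:ℝ) + 2 ^ i * dist y x ≠ 0
      linarith [h0]
  have hint_h : Integrable h μ := by
    refine Integrable.mono' (integrable_const ((2:ℝ) ^ t))
      hcont_h.measurable.aestronglyMeasurable ?_
    filter_upwards with y
    rw [Real.norm_eq_abs]
    have hr0 : (0:ℝ) ≤ dist y x := dist_nonneg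
    have h1 : dist y x ^ t ≤ (2:ℝ) ^ t :=
      Real.rpow_le_rpow hr0 (sphere_dist_le_two y x) ht.le
    have h2 : ((1 + 2 ^ i * dist y x)⁻¹) ^ (d + 2) ≤ 1 := by
      apply pow_le_one₀ (by positivity)
      apply inv_le_one_of_one_le₀
      have : (0:ℝ) ≤ 2 ^ i * dist y x := by positivity
      linarith
    have h0 : 0 ≤ h y :=
      mul_nonneg (Real.rpow_nonneg hr0 _) (by positivity)
    rw [abs_of_nonneg h0]
    calc h y ≤ dist y x ^ t * 1 :=
          mul_le_mul_of_nonneg_left h2 (Real.rpow_nonneg hr0 _)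
    _ = dist y x ^ t := mul_one _
    _ ≤ (2:ℝ) ^ t := h1
  have hψbound : ∀ y, |ψ y| ≤ c 0 * P := by
    intro y
    have h0 := hψ 0 y
    simpa using h0
  have hint_ψ : Integrable ψ μ := by
    refine Integrable.mono' (integrable_const (c 0 * P)) hψm.aestronglyMeasurable ?_
    filter_upwards with y
    rw [Real.norm_eq_abs]
    exact hψbound y
  have hint_ψf : Integrable (fun y => ψ y * f y) μ := by
    refine Integrable.mono' (integrable_const (c 0 * P * Mf))
      (hψm.mul hfm).aestronglyMeasurable ?_
    filter_upwards with y
    rw [Real.norm_eq_abs, abs_mul]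
    have h1 := hψbound y
    have h2 := hfb y
    have h3 : (0:ℝ) ≤ |ψ y| := abs_nonneg _
    have h4 : (0:ℝ) ≤ |f y| := abs_nonneg _
    nlinarith
  have hint_ψfx : Integrable (fun y => ψ y * f x) μ := hint_ψ.mul_const (f x)
  have hint_sub : Integrable (fun y => ψ y * (f y - f x)) μ := by
    have e : (fun y => ψ y * (f y - f x)) = fun y => ψ y * f y - ψ y * f x := by
      funext y; ring
    rw [e]
    exact hint_ψf.sub hint_ψfx
  -- reduce to integral against f - f x
  have hzero : ∫ y, ψ y * f y ∂μ = ∫ y, ψ y * (f y - f x) ∂μ := by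
    have e : (fun y => ψ y * (f y - f x)) = fun y => ψ y * f y - ψ y * f x := by
      funext y; ring
    rw [e, integral_sub hint_ψf hint_ψfx, integral_mul_const, hψ0, zero_mul, sub_zero]
  have habs : |∫ y, ψ y * (f y - f x) ∂μ| ≤ ∫ y, |ψ y * (f y - f x)| ∂μ := by
    have h0 := norm_integral_le_integral_norm (μ := μ) (f := fun y => ψ y * (f y - f x))
    simp only [Real.norm_eq_abs] at h0
    exact h0
  have hmono : ∫ y, |ψ y * (f y - f x)| ∂μ ≤ ∫ y, D * h y ∂μ :=
    integral_mono hint_sub.abs (hint_h.const_mul D) hdom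
  have hDh : ∫ y, D * h y ∂μ = D * ∫ y, h y ∂μ := integral_const_mul D _
  have hann := annulus_bound d hd ht ht1 hA capA i x
  rw [← hμdef] at hann
  have hIh : ∫ y, h y ∂μ ≤ 2 * A * (((2:ℝ) ^ i)⁻¹ ^ t * (((2:ℝ) ^ i)⁻¹) ^ (d - 1)) := hann
  have hfinal : D * ∫ y, h y ∂μ
      ≤ D * (2 * A * (((2:ℝ) ^ i)⁻¹ ^ t * (((2:ℝ) ^ i)⁻¹) ^ (d - 1))) := by
    apply mul_le_mul_of_nonneg_left ?_ hDnn
    exact hIh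
  have hid : P * (((2:ℝ) ^ i)⁻¹ ^ t * (((2:ℝ) ^ i)⁻¹) ^ (d - 1))
      = (2:ℝ) ^ (-(i:ℝ) * (2 * t + (d:ℝ) - 1) / 2) := by
    rw [hP]
    exact pow_identity d hd t i
  have hrpow_pos : (0:ℝ) < (2:ℝ) ^ (-(i:ℝ) * (2 * t + (d:ℝ) - 1) / 2) :=
    Real.rpow_pos_of_pos two_pos _
  calc |∫ y, ψ y * f y ∂μ| = |∫ y, ψ y * (f y - f x) ∂μ| := by rw [hzero]
  _ ≤ ∫ y, |ψ y * (f y - f x)| ∂μ := habs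
  _ ≤ ∫ y, D * h y ∂μ := hmono
  _ = D * ∫ y, h y ∂μ := hDh
  _ ≤ D * (2 * A * (((2:ℝ) ^ i)⁻¹ ^ t * (((2:ℝ) ^ i)⁻¹) ^ (d - 1))) := hfinal
  _ = (c m * Km ^ m * M'' * (2 * A)) *
        (P * (((2:ℝ) ^ i)⁻¹ ^ t * (((2:ℝ) ^ i)⁻¹) ^ (d - 1))) := by rw [hD]; ring
  _ = (c m * Km ^ m * M'' * (2 * A)) * (2:ℝ) ^ (-(i:ℝ) * (2 * t + (d:ℝ) - 1) / 2) := by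
      rw [hid]
  _ ≤ (|c m| * Km ^ m * M'' * (2 * A)) * (2:ℝ) ^ (-(i:ℝ) * (2 * t + (d:ℝ) - 1) / 2) := by
      have h1 : (0:ℝ) ≤ Km ^ m := by positivity
      have h2a : (0:ℝ) ≤ 2 * A := by linarith [hA.le]
      have hX : (0:ℝ) ≤ Km ^ m * M'' * (2 * A) * (2:ℝ) ^ (-(i:ℝ) * (2 * t + (d:ℝ) - 1) / 2) :=
        mul_nonneg (mul_nonneg (mul_nonneg h1 hM''nn) h2a) hrpow_pos.le
      have hfin := mul_le_mul_of_nonneg_right (le_abs_self (c m)) hX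
      nlinarith [hfin]
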